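/- Let $k : [1,\infty) \to \mathbb{N}$ be defined by $k(\nu) = $ the nearest integer to $\nu/2 - 1/4$ (rounding up at half-integers). Then $|k(\nu) - \nu/2| \le 3/4$ for all $\nu \ge 1$, and if a sequence $(\nu_j)$ with multiplicities satisfies $\#\{j : \nu_j \le \rho\} = c\rho^{n-1} + o(\rho^{n-1})$ for some $c > 0$ and integer $n \ge 2$, then $\sum_{j : \nu_j \le r} k(\nu_j) = \frac{c(n-1)}{2n} r^n + o(r^n)$ as $r \to \infty$. -/

import Mathlib

open Filter Asymptotics MeasureTheory

private lemma aux_integral_asymp (m : ℕ) (c : ℝ) (N : ℝ → ℝ) (hmono : Monotone N)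
    (h : (fun ρ : ℝ => N ρ - c * ρ ^ m) =o[atTop] fun ρ : ℝ => ρ ^ m) :
    (fun r : ℝ => (∫ t in Set.Ioc (0:ℝ) r, N t) - c * r ^ (m + 1) / ((m : ℝ) + 1))
      =o[atTop] fun r : ℝ => r ^ (m + 1) := by
  have hNint : ∀ a b : ℝ, IntegrableOn N (Set.Ioc a b) := fun a b =>
    ((hmono.monotoneOn _).integrableOn_isCompact isCompact_Icc).mono_set
      Set.Ioc_subset_Icc_self
  have hpint : ∀ a b : ℝ, IntegrableOn (fun t : ℝ => c * t ^ m) (Set.Ioc a b) := fun a b =>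
    (continuous_const.mul (continuous_pow m)).integrableOn_Ioc
  have hint : ∀ a b : ℝ, IntegrableOn (fun t => N t - c * t ^ m) (Set.Ioc a b) :=
    fun a b => (hNint a b).sub (hpint a b)
  rw [isLittleO_iff]
  intro ε hε
  have hε2 : 0 < ε / 2 := by positivity
  obtain ⟨T₀, hT₀⟩ := Filter.eventually_atTop.1 (isLittleO_iff.1 h hε2)
  set T := max T₀ 1 with hT
  set C := ‖∫ t in Set.Ioc (0:ℝ) T, (N t - c * t ^ m)‖ with hC
  have hm0 : (0:ℝ) < (m:ℝ) + 1 := by positivity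
  have htend : Tendsto (fun r : ℝ => ε / 2 * r ^ (m+1)) atTop atTop :=
    (tendsto_pow_atTop (Nat.succ_ne_zero m)).const_mul_atTop hε2
  filter_upwards [eventually_ge_atTop T, eventually_ge_atTop (1:ℝ),
    htend.eventually_ge_atTop C] with r hrT hr1 hrC
  have h0T : (0:ℝ) ≤ T := le_trans zero_le_one (le_max_right _ _)
  have h0r : (0:ℝ) ≤ r := le_trans h0T hrT
  have e1 : ∫ t in Set.Ioc (0:ℝ) r, (N t - c * t ^ m)
      = (∫ t in Set.Ioc (0:ℝ) r, N t) - c * r ^ (m+1) / ((m : ℝ) + 1) := by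
    rw [integral_sub (hNint 0 r) (hpint 0 r)]
    congr 1
    rw [← intervalIntegral.integral_of_le h0r, intervalIntegral.integral_const_mul,
      integral_pow, zero_pow (Nat.succ_ne_zero m)]
    push_cast
    ring
  have esplit : ∫ t in Set.Ioc (0:ℝ) r, (N t - c * t ^ m)
      = (∫ t in Set.Ioc (0:ℝ) T, (N t - c * t ^ m))
        + ∫ t in Set.Ioc T r, (N t - c * t ^ m) := by
    rw [← setIntegral_union (Set.Ioc_disjoint_Ioc_of_le le_rfl) measurableSet_Ioc (hint 0 T) (hint T r),
      Set.Ioc_union_Ioc_eq_Ioc h0T hrT]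
  have etail : ‖∫ t in Set.Ioc T r, (N t - c * t ^ m)‖ ≤ ε / 2 * r ^ (m+1) := by
    refine (norm_integral_le_integral_norm _).trans ?_
    have hb : ∀ t ∈ Set.Ioc T r, ‖N t - c * t ^ m‖ ≤ ε / 2 * t ^ m := by
      intro t ht
      have h1 : T₀ ≤ t := le_trans (le_max_left _ _) ht.1.le
      have h2 : (0:ℝ) < t := lt_of_lt_of_le zero_lt_one (le_trans (le_max_right _ _) ht.1.le)
      have := hT₀ t h1
      rwa [Real.norm_eq_abs (t ^ m), abs_of_nonneg (pow_nonneg h2.le m)] at this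
    calc ∫ t in Set.Ioc T r, ‖N t - c * t ^ m‖
        ≤ ∫ t in Set.Ioc T r, ε / 2 * t ^ m :=
          setIntegral_mono_on (hint T r).norm
            ((continuous_const.mul (continuous_pow m)).integrableOn_Ioc)
            measurableSet_Ioc hb
      _ = ε / 2 * ∫ t in Set.Ioc T r, t ^ m := by rw [integral_const_mul]
      _ ≤ ε / 2 * r ^ (m+1) := by
          refine mul_le_mul_of_nonneg_left ?_ hε2.le
          rw [← intervalIntegral.integral_of_le hrT, integral_pow]
          rw [div_le_iff₀ hm0]
          nlinarith [pow_nonneg h0T (m+1), pow_nonneg h0r (m+1), Nat.cast_nonneg (α := ℝ) m]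
  rw [← e1, esplit]
  calc ‖(∫ t in Set.Ioc (0:ℝ) T, (N t - c * t ^ m))
        + ∫ t in Set.Ioc T r, (N t - c * t ^ m)‖
      ≤ C + ‖∫ t in Set.Ioc T r, (N t - c * t ^ m)‖ := norm_add_le _ _
    _ ≤ ε / 2 * r ^ (m+1) + ε / 2 * r ^ (m+1) := add_le_add hrC etail
    _ = ε * r ^ (m+1) := by ring
    _ = ε * ‖r ^ (m+1)‖ := by
        rw [Real.norm_eq_abs, abs_of_nonneg (pow_nonneg h0r _)]

/-- Watson's count of zeros of `H²_ν` in the sector `0 ≤ arg z ≤ π/2` is the nearest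
integer `k(ν)` to `ν/2 - 1/4` (rounding up at half-integers, as Mathlib's `round` does);
then `|k(ν) - ν/2| ≤ 3/4` for `ν ≥ 1`, and summing these counts against a Weyl law
`#{j : ν_j ≤ ρ} = c ρ^(n-1) + o(ρ^(n-1))` gives
`∑_{ν_j ≤ r} k(ν_j) = (c(n-1)/(2n)) rⁿ + o(rⁿ)`. -/
theorem watson_count_summation
    (n : ℕ) (hn : 2 ≤ n) (c : ℝ) (hc : 0 < c)
    (ν : ℕ → ℝ) (hν : ∀ j, 1 ≤ ν j)
    (hfin : ∀ ρ : ℝ, {j | ν j ≤ ρ}.Finite)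
    (hweyl : (fun ρ : ℝ => (((hfin ρ).toFinset.card : ℝ) - c * ρ ^ (n - 1)))
      =o[atTop] (fun ρ : ℝ => ρ ^ (n - 1))) :
    (∀ νr : ℝ, 1 ≤ νr → |((round (νr / 2 - 1 / 4) : ℤ) : ℝ) - νr / 2| ≤ 3 / 4) ∧
    (fun r : ℝ =>
        (∑ j ∈ (hfin r).toFinset, ((round (ν j / 2 - 1 / 4) : ℤ) : ℝ))
          - c * ((n : ℝ) - 1) / (2 * n) * r ^ n)
      =o[atTop] (fun r : ℝ => r ^ n) := by
  have hround : ∀ νr : ℝ, 1 ≤ νr →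
      |((round (νr / 2 - 1 / 4) : ℤ) : ℝ) - νr / 2| ≤ 3 / 4 := by
    intro x _
    have h : |((round (x / 2 - 1 / 4) : ℤ) : ℝ) - (x / 2 - 1 / 4)| ≤ 1 / 2 := by
      rw [abs_sub_comm]; exact abs_sub_round _
    have e : ((round (x / 2 - 1 / 4) : ℤ) : ℝ) - x / 2
        = (((round (x / 2 - 1 / 4) : ℤ) : ℝ) - (x / 2 - 1 / 4)) + (-(1/4)) := by ring
    rw [e]
    refine (abs_add_le _ _).trans ?_
    rw [abs_neg]
    have : |(1/4 : ℝ)| = 1/4 := by norm_num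
    linarith
  refine ⟨hround, ?_⟩
  set m := n - 1 with hm
  have hmn : m + 1 = n := by omega
  set N : ℝ → ℝ := fun ρ => ((hfin ρ).toFinset.card : ℝ) with hN
  have hweyl' : (fun ρ : ℝ => N ρ - c * ρ ^ m) =o[atTop] fun ρ : ℝ => ρ ^ m := hweyl
  have hmono : Monotone N := by
    intro a b hab
    refine Nat.cast_le.2 (Finset.card_le_card ?_)
    intro j hj
    simp only [Set.Finite.mem_toFinset, Set.mem_setOf_eq] at *
    exact hj.trans hab
  have hNint : ∀ r : ℝ, IntegrableOn N (Set.Ioc 0 r) := fun r =>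
    ((hmono.monotoneOn _).integrableOn_isCompact isCompact_Icc).mono_set
      Set.Ioc_subset_Icc_self
  -- Abel summation identity
  have key : ∀ r : ℝ, 0 ≤ r →
      ∑ j ∈ (hfin r).toFinset, ν j = r * N r - ∫ t in Set.Ioc (0:ℝ) r, N t := by
    intro r hr
    have hvol : volume (Set.Ioc (0:ℝ) r) = ENNReal.ofReal r := by
      rw [Real.volume_Ioc, sub_zero]
    have h1 : ∫ t in Set.Ioc (0:ℝ) r, (N r - N t)
        = r * N r - ∫ t in Set.Ioc (0:ℝ) r, N t := by
      rw [integral_sub (integrableOn_const (C := N r) (by rw [hvol]; exact ENNReal.ofReal_lt_top.ne))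
        (hNint r), setIntegral_const, Real.volume_real_Ioc_of_le hr, sub_zero, smul_eq_mul]
    rw [← h1]
    have h2 : ∀ t ∈ Set.Ioc (0:ℝ) r,
        N r - N t = ∑ j ∈ (hfin r).toFinset,
          (Set.Iio (ν j)).indicator (fun _ => (1:ℝ)) t := by
      intro t ht
      have hsub : (hfin t).toFinset ⊆ (hfin r).toFinset := by
        intro j hj
        simp only [Set.Finite.mem_toFinset, Set.mem_setOf_eq] at *
        exact hj.trans ht.2
      have hfilter : (hfin r).toFinset.filter (fun j => ¬ t < ν j) = (hfin t).toFinset := by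
        ext j
        simp only [Finset.mem_filter, Set.Finite.mem_toFinset, Set.mem_setOf_eq, not_lt]
        exact ⟨fun h => h.2, fun h => ⟨h.trans ht.2, h⟩⟩
      have hsum : ∑ j ∈ (hfin r).toFinset, (Set.Iio (ν j)).indicator (fun _ => (1:ℝ)) t
          = (((hfin r).toFinset.filter (fun j => t < ν j)).card : ℝ) := by
        rw [Finset.card_filter]
        push_cast
        refine Finset.sum_congr rfl fun j _ => ?_
        by_cases h : t < ν j <;> simp [Set.indicator_apply, Set.mem_Iio, h]
      rw [hsum]
      have hcards := Finset.card_filter_add_card_filter_not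
        (s := (hfin r).toFinset) (p := fun j => t < ν j)
      rw [hfilter] at hcards
      have e' : (((hfin r).toFinset.filter (fun j => t < ν j)).card : ℝ)
          + ((hfin t).toFinset.card : ℝ) = ((hfin r).toFinset.card : ℝ) := by
        exact_mod_cast hcards
      simp only [hN]
      linarith
    rw [setIntegral_congr_fun measurableSet_Ioc h2]
    have hconst : IntegrableOn (fun _ : ℝ => (1:ℝ)) (Set.Ioc (0:ℝ) r) :=
      integrableOn_const (by rw [hvol]; exact ENNReal.ofReal_lt_top.ne)
    rw [integral_finset_sum _ (fun j _ => hconst.indicator measurableSet_Iio)]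
    refine Finset.sum_congr rfl fun j hj => ?_
    have hjr : ν j ≤ r := by simpa [Set.Finite.mem_toFinset] using hj
    rw [setIntegral_indicator measurableSet_Iio]
    have hset : Set.Ioc (0:ℝ) r ∩ Set.Iio (ν j) = Set.Ioo 0 (ν j) := by
      ext t
      simp only [Set.mem_inter_iff, Set.mem_Ioc, Set.mem_Iio, Set.mem_Ioo]
      exact ⟨fun h => ⟨h.1.1, h.2⟩, fun h => ⟨⟨h.1, h.2.le.trans hjr⟩, h.2⟩⟩
    rw [hset, setIntegral_const, Real.volume_real_Ioo_of_le (le_trans zero_le_one (hν j)), sub_zero,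
      smul_eq_mul, mul_one]
  -- asymptotic pieces
  have hNO : (fun ρ : ℝ => N ρ) =O[atTop] fun ρ : ℝ => ρ ^ m := by
    have h2 : (fun ρ : ℝ => c * ρ ^ m) =O[atTop] fun ρ : ℝ => ρ ^ m :=
      (isBigO_refl _ _).const_mul_left c
    simpa using hweyl'.isBigO.add h2
  have hpow_lt : (fun r : ℝ => r ^ m) =o[atTop] fun r : ℝ => r ^ n :=
    isLittleO_pow_pow_atTop_of_lt (by omega)
  have hg1 : (fun r : ℝ => ∑ j ∈ (hfin r).toFinset,
      (((round (ν j / 2 - 1 / 4) : ℤ) : ℝ) - ν j / 2)) =o[atTop] fun r : ℝ => r ^ n := by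
    refine (IsBigO.trans ?_ hNO).trans_isLittleO hpow_lt
    refine isBigO_iff.2 ⟨3/4, Filter.Eventually.of_forall fun r => ?_⟩
    calc ‖∑ j ∈ (hfin r).toFinset, (((round (ν j / 2 - 1 / 4) : ℤ) : ℝ) - ν j / 2)‖
        ≤ ∑ j ∈ (hfin r).toFinset, ‖((round (ν j / 2 - 1 / 4) : ℤ) : ℝ) - ν j / 2‖ :=
          norm_sum_le _ _
      _ ≤ ∑ _j ∈ (hfin r).toFinset, (3/4 : ℝ) :=
          Finset.sum_le_sum fun j _ => by
            rw [Real.norm_eq_abs]; exact hround (ν j) (hν j)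
      _ = 3/4 * N r := by rw [Finset.sum_const, nsmul_eq_mul]; simp only [hN]; ring
      _ ≤ 3/4 * ‖N r‖ := by
          refine mul_le_mul_of_nonneg_left (le_abs_self _) (by norm_num)
  have hg2 : (fun r : ℝ => r * (N r - c * r ^ m)) =o[atTop] fun r : ℝ => r ^ n := by
    have heq : (fun r : ℝ => r * r ^ m) = fun r : ℝ => r ^ n := by
      funext r; rw [← pow_succ', hmn]
    rw [← heq]
    exact (isBigO_refl _ _).mul_isLittleO hweyl'
  have hg3 : (fun r : ℝ => (∫ t in Set.Ioc (0:ℝ) r, N t) - c * r ^ n / (n : ℝ))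
      =o[atTop] fun r : ℝ => r ^ n := by
    have h := aux_integral_asymp m c N hmono hweyl'
    have hcast : ((m : ℝ) + 1) = (n : ℝ) := by exact_mod_cast congrArg (Nat.cast (R := ℝ)) hmn
    rw [hmn, hcast] at h
    exact h
  have hsum : (fun r : ℝ =>
      (∑ j ∈ (hfin r).toFinset, (((round (ν j / 2 - 1 / 4) : ℤ) : ℝ) - ν j / 2))
      + (1/2) * (r * (N r - c * r ^ m))
      + (-(1/2)) * ((∫ t in Set.Ioc (0:ℝ) r, N t) - c * r ^ n / (n : ℝ)))
      =o[atTop] fun r : ℝ => r ^ n :=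
    (hg1.add (hg2.const_mul_left (1/2))).add (hg3.const_mul_left (-(1/2)))
  refine hsum.congr' ?_ (Filter.EventuallyEq.refl _ _)
  filter_upwards [eventually_ge_atTop (0:ℝ)] with r hr
  have hk := key r hr
  have hsplit : ∑ j ∈ (hfin r).toFinset, ((round (ν j / 2 - 1 / 4) : ℤ) : ℝ)
      = (∑ j ∈ (hfin r).toFinset, (((round (ν j / 2 - 1 / 4) : ℤ) : ℝ) - ν j / 2))
        + (1/2) * ∑ j ∈ (hfin r).toFinset, ν j := by
    rw [Finset.mul_sum, ← Finset.sum_add_distrib]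
    exact Finset.sum_congr rfl fun j _ => by ring
  have hrn : r * (N r - c * r ^ m) = r * N r - c * r ^ n := by
    rw [mul_sub]
    congr 1
    rw [mul_left_comm, ← pow_succ', hmn]
  have hn0 : (n : ℝ) ≠ 0 := Nat.cast_ne_zero.2 (by omega)
  rw [hsplit, hk, hrn]
  field_simp
  ring
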